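/- Let ν ∈ E_ε be written as a sequence of primary particles ((l₁,c₁),…,(l_s,c_s)) with I indexing upper halves of the secondary particles (so l_i = l_{i+1} + ε(c_i,c_{i+1}) for i ∈ I), I+1 indexing lower halves, and J indexing the primary particles of ν, I, I+1, J forming a set-partition of {1,…,s}. Let σ be a permutation of {1,…,s} that is increasing on J, increasing on I, and satisfies σ(i+1) = σ(i)+1 for all i ∈ I, and set ν''_m = (l_{σ^{-1}(m)} + Δ(m, σ^{-1}(m)), c_m) for each position m. Suppose that for every j ∈ J and i ∈ I with σ(j)+1 = σ(i), ν''_{σ(j)} ≻_ε ν''_{σ(i)}, and for every j ∈ J and i ∈ I with σ(j)−1 = σ(i)+1, ν''_{σ(i)+1} ≫_ε ν''_{σ(j)} (where ≫_ε on primary particles means the potential difference strictly exceeds ε of the states). Then for all (j,i) ∈ J × I: σ(j) < σ(i) if and only if ψ(j,i) ≥ 0, where ψ(j,i) = l_j − l_i − Δ(j,i). -/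

import Mathlib

open Finset in
/-- The formal energy of transfer `Δ(k,k')` along the state sequence `c`:
`Δ(k,k') = Σ_{u=k}^{k'−1} ε(c_u,c_{u+1})` for `k ≤ k'` and `Δ(k,k') = −Δ(k',k)` else. -/
noncomputable def Del {C : Type*} (ε : C → C → ℤ) (c : ℤ → C) (k k' : ℤ) : ℤ :=
  (∑ u ∈ Finset.Ico k k', ε (c u) (c (u + 1))) -
    ∑ u ∈ Finset.Ico k' k, ε (c u) (c (u + 1))

/-- `β(k,k') = |[k,k') ∩ J|` for `k ≤ k'` and `β(k,k') = −β(k',k)` otherwise. -/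
noncomputable def Bet (J : Finset ℤ) (k k' : ℤ) : ℤ :=
  ((Finset.Ico k k' ∩ J).card : ℤ) - ((Finset.Ico k' k ∩ J).card : ℤ)

/-- The potential of the rearranged sequence at position `m`:
the particle originally at position `σ⁻¹(m)` gains the formal energy of transfer
`Δ(m, σ⁻¹(m))` (Lemma 4.4). -/
noncomputable def Lpp {C : Type*} (ε : C → C → ℤ) (c : ℤ → C) (l : ℤ → ℤ) (σ : Equiv.Perm ℤ)
    (m : ℤ) : ℤ :=
  l (σ.symm m) + Del ε c m (σ.symm m)


lemma Ico_succ_singleton (k : ℤ) : Finset.Ico k (k+1) = {k} := by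
  ext x; simp [Finset.mem_Ico]; omega

lemma sum_Ico_split (f : ℤ → ℤ) {a b d : ℤ} (h1 : a ≤ b) (h2 : b ≤ d) :
    ∑ u ∈ Finset.Ico a d, f u = (∑ u ∈ Finset.Ico a b, f u) + ∑ u ∈ Finset.Ico b d, f u := by
  rw [← Finset.Ico_union_Ico_eq_Ico h1 h2,
    Finset.sum_union (Finset.Ico_disjoint_Ico_consecutive a b d)]

lemma Del_self {C : Type*} (ε : C → C → ℤ) (c : ℤ → C) (k : ℤ) : Del ε c k k = 0 := by
  simp [Del]

lemma Del_succ' {C : Type*} (ε : C → C → ℤ) (c : ℤ → C) (a k k' : ℤ) (h : k' = k + 1) :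
    Del ε c a k' = Del ε c a k + ε (c k) (c k') := by
  subst h
  unfold Del
  rcases le_or_gt a k with hak | hak
  · rw [sum_Ico_split _ hak (by omega : k ≤ k+1),
        Ico_succ_singleton, Finset.sum_singleton,
        Finset.Ico_eq_empty (by omega : ¬ k + 1 < a), Finset.Ico_eq_empty (by omega : ¬ k < a)]
    simp
  · rw [Finset.Ico_eq_empty (by omega : ¬ a < k + 1), Finset.Ico_eq_empty (by omega : ¬ a < k),
        sum_Ico_split _ (by omega : k ≤ k + 1) (by omega : k + 1 ≤ a),
        Ico_succ_singleton, Finset.sum_singleton]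
    ring

lemma Del_add {C : Type*} (ε : C → C → ℤ) (c : ℤ → C) (a b d : ℤ) :
    Del ε c a b + Del ε c b d = Del ε c a d := by
  refine Int.inductionOn' d b ?_ ?_ ?_
  · rw [Del_self]; ring
  · intro k _ IH
    rw [Del_succ' ε c b k (k+1) rfl, Del_succ' ε c a k (k+1) rfl]
    linarith
  · intro k _ IH
    have h1 := Del_succ' ε c b (k-1) k (by ring)
    have h2 := Del_succ' ε c a (k-1) k (by ring)
    linarith

lemma Del_nonneg {C : Type*} (ε : C → C → ℤ) (c : ℤ → C) (hε : ∀ a b, 0 ≤ ε a b)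
    {a b : ℤ} (h : a ≤ b) : 0 ≤ Del ε c a b := by
  refine Int.le_induction (motive := fun b _ => 0 ≤ Del ε c a b) ?_ ?_ b h
  · simp [Del_self]
  · intro n hn IH
    rw [Del_succ' ε c a n (n+1) rfl]
    have := hε (c n) (c (n+1)); linarith

lemma Del_le {C : Type*} (ε : C → C → ℤ) (c : ℤ → C) (hε : ∀ a b, ε a b ≤ 1)
    {a b : ℤ} (h : a ≤ b) : Del ε c a b ≤ b - a := by
  refine Int.le_induction (motive := fun b _ => Del ε c a b ≤ b - a) ?_ ?_ b h
  · simp [Del_self]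
  · intro n hn IH
    rw [Del_succ' ε c a n (n+1) rfl]
    have := hε (c n) (c (n+1)); linarith

/-- Proposition 4.10 (final positions for `Ψ`): if in the rearranged sequence given by
`σ`, every primary particle immediately followed by the upper half of a secondary
particle is `≻_ε`-related to it, and every lower half immediately followed by a primary
particle is `≫_ε`-related to it, then for all `(j,i) ∈ J × I`,
`σ(j) < σ(i) ⟺ ψ(j,i) ≥ 0` where `ψ(j,i) = l_j − l_i − Δ(j,i)`. -/
theorem statement16 {C : Type*} (ε : C → C → ℤ)
    (hε : ∀ c c', ε c c' = 0 ∨ ε c c' = 1)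
    (s : ℤ) (l : ℤ → ℤ) (c : ℤ → C) (I J : Finset ℤ)
    (hd1 : Disjoint I (I.image (· + 1))) (hd2 : Disjoint I J)
    (hd3 : Disjoint (I.image (· + 1)) J)
    (hu : I ∪ I.image (· + 1) ∪ J = Finset.Icc 1 s)
    (hupper : ∀ i ∈ I, l i = l (i + 1) + ε (c i) (c (i + 1)))
    (hJJ : ∀ k, k ∈ J → k + 1 ∈ J →
      ε (c k) (c (k + 1)) < l k - l (k + 1))
    (hJI : ∀ k, k ∈ J → k + 1 ∈ I →
      ε (c k) (c (k + 1)) + ε (c (k + 1)) (c (k + 2)) ≤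
        l k - (2 * l (k + 2) + ε (c (k + 1)) (c (k + 2))))
    (hIJ : ∀ i ∈ I, i + 2 ∈ J →
      ε (c i) (c (i + 1)) + ε (c (i + 1)) (c (i + 2)) <
        (2 * l (i + 1) + ε (c i) (c (i + 1))) - l (i + 2))
    (hII : ∀ i ∈ I, i + 2 ∈ I →
      ε (c (i + 1)) (c (i + 2)) + ε (c (i + 2)) (c (i + 3)) ≤ l (i + 1) - l (i + 3))
    (σ : Equiv.Perm ℤ)
    (hσmaps : ∀ k ∈ Finset.Icc 1 s, σ k ∈ Finset.Icc 1 s)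
    (hσJ : ∀ j ∈ J, ∀ j' ∈ J, j < j' → σ j < σ j')
    (hσI : ∀ i ∈ I, ∀ i' ∈ I, i < i' → σ i < σ i')
    (hσI1 : ∀ i ∈ I, σ (i + 1) = σ i + 1)
    (hmeet1 : ∀ j ∈ J, ∀ i ∈ I, σ j + 1 = σ i →
      ε (c (σ j)) (c (σ i)) ≤ Lpp ε c l σ (σ j) - Lpp ε c l σ (σ i))
    (hmeet2 : ∀ j ∈ J, ∀ i ∈ I, σ j - 1 = σ i + 1 →
      ε (c (σ i + 1)) (c (σ j)) < Lpp ε c l σ (σ i + 1) - Lpp ε c l σ (σ j)) :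
    ∀ j ∈ J, ∀ i ∈ I, (σ j < σ i ↔ 0 ≤ l j - l i - Del ε c j i) := by
  classical
  -- basic facts about ε
  have heps0 : ∀ a b, 0 ≤ ε a b := fun a b => by rcases hε a b with h | h <;> omega
  have heps1 : ∀ a b, ε a b ≤ 1 := fun a b => by rcases hε a b with h | h <;> omega
  -- subset facts
  have hIsub : ∀ x ∈ I, x ∈ Finset.Icc 1 s := fun x hx => by
    rw [← hu]; exact Finset.mem_union_left _ (Finset.mem_union_left _ hx)
  have hI1sub : ∀ x ∈ I, x + 1 ∈ Finset.Icc 1 s := fun x hx => by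
    rw [← hu]
    exact Finset.mem_union_left _ (Finset.mem_union_right _ (Finset.mem_image_of_mem _ hx))
  have hJsub : ∀ x ∈ J, x ∈ Finset.Icc 1 s := fun x hx => by
    rw [← hu]; exact Finset.mem_union_right _ hx
  have himg : ∀ x : ℤ, x ∈ I.image (· + 1) ↔ x - 1 ∈ I := by
    intro x
    simp only [Finset.mem_image]
    constructor
    · rintro ⟨a, ha, rfl⟩; simpa using ha
    · intro h; exact ⟨x - 1, h, by ring⟩
  have classify : ∀ k : ℤ, k ∈ Finset.Icc 1 s → k ∈ I ∨ k - 1 ∈ I ∨ k ∈ J := by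
    intro k hk
    rw [← hu] at hk
    rcases Finset.mem_union.mp hk with hk | hk
    · rcases Finset.mem_union.mp hk with hk | hk
      · exact Or.inl hk
      · exact Or.inr (Or.inl ((himg k).mp hk))
    · exact Or.inr (Or.inr hk)
  have hInotim : ∀ x ∈ I, x - 1 ∉ I := fun x hx h =>
    (Finset.disjoint_left.mp hd1 hx) ((himg x).mpr h)
  have hJnotI : ∀ x ∈ J, x ∉ I := fun x hx h => Finset.disjoint_left.mp hd2 h hx
  have hJnotim : ∀ x ∈ J, x - 1 ∉ I := fun x hx h =>
    Finset.disjoint_left.mp hd3 ((himg x).mpr h) hx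
  -- σ.symm maps Icc 1 s to itself
  have hσIccSet : (Finset.Icc 1 s).image (σ : ℤ → ℤ) = Finset.Icc 1 s := by
    apply Finset.eq_of_subset_of_card_le
    · intro x hx
      obtain ⟨k, hk, rfl⟩ := Finset.mem_image.mp hx
      exact hσmaps k hk
    · rw [Finset.card_image_of_injective _ σ.injective]
  have hsymmIcc : ∀ m ∈ Finset.Icc 1 s, σ.symm m ∈ Finset.Icc 1 s := by
    intro m hm
    rw [← hσIccSet] at hm
    obtain ⟨k, hk, hkm⟩ := Finset.mem_image.mp hm
    rw [← hkm, Equiv.symm_apply_apply]; exact hk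
  have hnext : ∀ m, σ.symm m ∈ I → σ.symm (m + 1) = σ.symm m + 1 := by
    intro m hm
    have h1 := hσI1 _ hm
    rw [Equiv.apply_symm_apply] at h1
    rw [← h1, Equiv.symm_apply_apply]
  have hprev : ∀ m, σ.symm m - 1 ∈ I → σ (σ.symm m - 1) = m - 1 := by
    intro m hm
    have h1 := hσI1 _ hm
    rw [show σ.symm m - 1 + 1 = σ.symm m from by ring, Equiv.apply_symm_apply] at h1
    omega
  -- chain along a run of consecutive J positions
  have Jrun : ∀ a b : ℤ, a ≤ b → (∀ k, a ≤ k → k ≤ b → k ∈ J) →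
      Del ε c a b + (b - a) ≤ l a - l b := by
    intro a b hab
    refine Int.le_induction
      (motive := fun b _ => (∀ k, a ≤ k → k ≤ b → k ∈ J) → Del ε c a b + (b - a) ≤ l a - l b)
      ?_ ?_ b hab
    · intro _; simp [Del_self]
    · intro b hb IH hall
      have h1 := IH (fun k hk1 hk2 => hall k hk1 (by omega))
      have h2 := hJJ b (hall b hb (by omega)) (hall (b+1) (by omega) (by omega))
      have hd := Del_succ' ε c a b (b+1) rfl
      linarith
  -- chain lemma from a J position
  have JX : ∀ n : ℕ, ∀ p w : ℤ, p ∈ J → p < w → w ≤ s → (w - p).toNat = n →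
      (w ∈ J → Del ε c p w + 1 ≤ l p - l w) ∧
      (w ∈ I → Del ε c p w + ε (c w) (c (w + 1)) ≤ l p - (l w + l (w + 1))) := by
    intro n
    induction n using Nat.strong_induction_on with
    | _ n IH =>
      intro p w hp hpw hws hn
      have hp1 : 1 ≤ p := (Finset.mem_Icc.mp (hJsub p hp)).1
      by_cases hadj : w = p + 1
      · subst hadj
        have hdel : Del ε c p (p+1) = ε (c p) (c (p+1)) := by
          rw [Del_succ' ε c p p (p+1) rfl, Del_self]; ring
        constructor
        · intro hw
          have h := hJJ p hp hw
          linarith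
        · intro hw
          have h := hJI p hp hw
          have hup := hupper (p+1) hw
          rw [show p + 1 + 1 = p + 2 from by ring] at hup ⊢
          linarith
      · have hw1Icc : w - 1 ∈ Finset.Icc 1 s := Finset.mem_Icc.mpr ⟨by omega, by omega⟩
        rcases classify (w - 1) hw1Icc with hc | hc | hc
        · -- w - 1 ∈ I : w is a lower half, both implications vacuous
          have him : w ∈ I.image (· + 1) := (himg w).mpr hc
          exact ⟨fun hw => absurd hw (Finset.disjoint_left.mp hd3 him),
                 fun hw => absurd hw (Finset.disjoint_right.mp hd1 him)⟩
        · -- w - 2 ∈ I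
          obtain ⟨v, rfl⟩ : ∃ v, w = v + 2 := ⟨w - 2, by ring⟩
          have hv : v ∈ I := by rwa [show v + 2 - 1 - 1 = v from by ring] at hc
          have hne1 : p ≠ v := fun h => hJnotI p hp (by rw [h]; exact hv)
          have hne2 : p ≠ v + 1 := by
            intro h
            exact hJnotim p hp (by rw [h]; simpa using hv)
          have hpv : p < v := by omega
          have IH2 := (IH (v - p).toNat (by omega) p v hp hpv (by omega) rfl).2 hv
          have hupv := hupper v hv
          have hd1 : Del ε c p (v+1) = Del ε c p v + ε (c v) (c (v+1)) :=
            Del_succ' ε c p v (v+1) rfl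
          have hd2 : Del ε c p (v+2) = Del ε c p (v+1) + ε (c (v+1)) (c (v+2)) :=
            Del_succ' ε c p (v+1) (v+2) (by ring)
          constructor
          · intro hw
            have h := hIJ v hv hw
            have := heps0 (c v) (c (v+1))
            linarith
          · intro hw
            have h := hII v hv hw
            have hupw := hupper (v+2) hw
            rw [show v + 2 + 1 = v + 3 from by ring] at hupw ⊢
            have e0 := heps0 (c v) (c (v+1))
            have e1 := heps0 (c (v+1)) (c (v+2))
            linarith
        · -- w - 1 ∈ J
          obtain ⟨v, rfl⟩ : ∃ v, w = v + 1 := ⟨w - 1, by ring⟩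
          have hvJ : v ∈ J := by rwa [show v + 1 - 1 = v from by ring] at hc
          have hpv : p < v := by
            have : p ≠ v := fun h => hadj (by rw [h])
            omega
          have IH1 := (IH (v - p).toNat (by omega) p v hp hpv (by omega) rfl).1 hvJ
          have hd1 : Del ε c p (v+1) = Del ε c p v + ε (c v) (c (v+1)) :=
            Del_succ' ε c p v (v+1) rfl
          constructor
          · intro hw
            have h := hJJ v hvJ hw
            linarith
          · intro hw
            have h := hJI v hvJ hw
            have hupw := hupper (v+1) hw
            rw [show v + 1 + 1 = v + 2 from by ring] at hupw ⊢
            have hd2 : Del ε c p (v+2) = Del ε c p (v+1) + ε (c (v+1)) (c (v+2)) :=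
              Del_succ' ε c p (v+1) (v+2) (by ring)
            have e0 := heps0 (c v) (c (v+1))
            linarith
  -- chain lemma between lower halves
  have aLem : ∀ n : ℕ, ∀ i0 i1 : ℤ, i0 ∈ I → i1 ∈ I → i0 < i1 → (i1 - i0).toNat = n →
      Del ε c (i0+1) (i1+1) ≤ l (i0+1) - l (i1+1) := by
    intro n
    induction n using Nat.strong_induction_on with
    | _ n IH =>
      intro i0 i1 h0 h1 hlt hn
      by_cases hmid : ∃ x ∈ I, i0 < x ∧ x < i1
      · obtain ⟨x, hx, hx0, hx1⟩ := hmid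
        have ha := IH (x - i0).toNat (by omega) i0 x h0 hx hx0 rfl
        have hb := IH (i1 - x).toNat (by omega) x i1 hx h1 hx1 rfl
        have hd := Del_add ε c (i0+1) (x+1) (i1+1)
        linarith
      · push_neg at hmid
        have hne1 : i1 ≠ i0 + 1 := by
          intro h
          exact hInotim i1 h1 (by rw [h]; simpa using h0)
        have h2le : i0 + 2 ≤ i1 := by omega
        rcases eq_or_lt_of_le h2le with heq | hlt3
        · -- adjacent pairs
          subst heq
          have h := hII i0 h0 h1
          rw [show i0 + 2 + 1 = i0 + 3 from by ring]
          have d1 : Del ε c (i0+1) (i0+2) = Del ε c (i0+1) (i0+1) + ε (c (i0+1)) (c (i0+2)) :=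
            Del_succ' ε c (i0+1) (i0+1) (i0+2) (by ring)
          have d2 : Del ε c (i0+1) (i0+3) = Del ε c (i0+1) (i0+2) + ε (c (i0+2)) (c (i0+3)) :=
            Del_succ' ε c (i0+1) (i0+2) (i0+3) (by ring)
          rw [Del_self] at d1
          linarith
        · -- a run of J's in between
          have hi01 := Finset.mem_Icc.mp (hIsub i0 h0)
          have hi11 := Finset.mem_Icc.mp (hIsub i1 h1)
          have hmidJ : ∀ k, i0 + 2 ≤ k → k ≤ i1 - 1 → k ∈ J := by
            intro k hk1 hk2
            have hkIcc : k ∈ Finset.Icc 1 s := Finset.mem_Icc.mpr ⟨by omega, by omega⟩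
            rcases classify k hkIcc with hk | hk | hk
            · exact absurd (hmid k hk (by omega)) (by omega)
            · exact absurd (hmid (k-1) hk (by omega)) (by omega)
            · exact hk
          have hA := hIJ i0 h0 (hmidJ (i0+2) le_rfl (by omega))
          have hB := Jrun (i0+2) (i1-1) (by omega) (fun k hk1 hk2 => hmidJ k hk1 hk2)
          have hC := hJI (i1-1) (hmidJ (i1-1) (by omega) le_rfl)
            (by rw [show i1 - 1 + 1 = i1 from by ring]; exact h1)
          rw [show i1 - 1 + 1 = i1 from by ring, show i1 - 1 + 2 = i1 + 1 from by ring] at hC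
          have d1 : Del ε c (i0+1) (i0+2) = Del ε c (i0+1) (i0+1) + ε (c (i0+1)) (c (i0+2)) :=
            Del_succ' ε c (i0+1) (i0+1) (i0+2) (by ring)
          rw [Del_self] at d1
          have d2 := Del_add ε c (i0+1) (i0+2) (i1-1)
          have d3 : Del ε c (i0+1) i1 = Del ε c (i0+1) (i1-1) + ε (c (i1-1)) (c i1) :=
            Del_succ' ε c (i0+1) (i1-1) i1 (by ring)
          have d4 : Del ε c (i0+1) (i1+1) = Del ε c (i0+1) i1 + ε (c i1) (c (i1+1)) :=
            Del_succ' ε c (i0+1) i1 (i1+1) rfl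
          have hM0 : (0:ℤ) ≤ Del ε c (i0+2) (i1-1) := Del_nonneg ε c heps0 (by omega)
          have hM1 : Del ε c (i0+2) (i1-1) ≤ (i1-1) - (i0+2) := Del_le ε c heps1 (by omega)
          have e1 := heps1 (c (i0+1)) (c (i0+2))
          have e2 := heps1 (c (i1-1)) (c i1)
          have e3 := heps0 (c i1) (c (i1+1))
          have e4 := heps1 (c i1) (c (i1+1))
          by_contra hcon
          push_neg at hcon
          have hcon' := Int.lt_iff_add_one_le.mp hcon
          linarith
  -- conversion between Lpp differences and the rearranged step quantities
  have lppconv : ∀ m : ℤ,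
      Lpp ε c l σ m - Lpp ε c l σ (m+1) - ε (c m) (c (m+1))
        = l (σ.symm m) - l (σ.symm (m+1)) - Del ε c (σ.symm m) (σ.symm (m+1)) := by
    intro m
    unfold Lpp
    have h1 := Del_add ε c m (σ.symm m) (σ.symm (m+1))
    have h2 := Del_add ε c m (m+1) (σ.symm (m+1))
    have h3 : Del ε c m (m+1) = ε (c m) (c (m+1)) := by
      rw [Del_succ' ε c m m (m+1) rfl, Del_self]; ring
    linarith
  -- strict positivity of a rearranged step landing on a J particle
  have gpos : ∀ m : ℤ, 1 ≤ m → m + 1 ≤ s → σ.symm (m+1) ∈ J →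
      0 < l (σ.symm m) - l (σ.symm (m+1)) - Del ε c (σ.symm m) (σ.symm (m+1)) := by
    intro m hm1 hm2 hqJ
    have hmIcc : m ∈ Finset.Icc 1 s := Finset.mem_Icc.mpr ⟨hm1, by omega⟩
    have hm1Icc : m + 1 ∈ Finset.Icc 1 s := Finset.mem_Icc.mpr ⟨by omega, hm2⟩
    have hpIcc := hsymmIcc m hmIcc
    have hqIcc := hsymmIcc (m+1) hm1Icc
    rcases classify _ hpIcc with hp | hp | hp
    · exfalso
      have hq1 := hnext m hp
      exact hJnotim _ hqJ (by rw [hq1]; simpa using hp)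
    · -- lower half followed by a J particle : hmeet2
      have hσi0 : σ (σ.symm m - 1) = m - 1 := hprev m hp
      have hm2' := hmeet2 (σ.symm (m+1)) hqJ (σ.symm m - 1) hp
        (by rw [Equiv.apply_symm_apply, hσi0]; ring)
      rw [Equiv.apply_symm_apply, hσi0, show m - 1 + 1 = m from by ring] at hm2'
      have hcv := lppconv m
      linarith
    · -- J followed by J
      have hlt : σ.symm m < σ.symm (m+1) := by
        rcases lt_trichotomy (σ.symm m) (σ.symm (m+1)) with h | h | h
        · exact h
        · exfalso
          have := congrArg σ h
          rw [Equiv.apply_symm_apply, Equiv.apply_symm_apply] at this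
          omega
        · exfalso
          have := hσJ _ hqJ _ hp h
          rw [Equiv.apply_symm_apply, Equiv.apply_symm_apply] at this
          omega
      have h := (JX (σ.symm (m+1) - σ.symm m).toNat _ _ hp hlt
        (Finset.mem_Icc.mp hqIcc).2 rfl).1 hqJ
      linarith
  -- nonnegativity of every rearranged step
  have gnonneg : ∀ m : ℤ, 1 ≤ m → m + 1 ≤ s →
      0 ≤ l (σ.symm m) - l (σ.symm (m+1)) - Del ε c (σ.symm m) (σ.symm (m+1)) := by
    intro m hm1 hm2
    have hmIcc : m ∈ Finset.Icc 1 s := Finset.mem_Icc.mpr ⟨hm1, by omega⟩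
    have hm1Icc : m + 1 ∈ Finset.Icc 1 s := Finset.mem_Icc.mpr ⟨by omega, hm2⟩
    have hpIcc := hsymmIcc m hmIcc
    have hqIcc := hsymmIcc (m+1) hm1Icc
    rcases classify _ hqIcc with hq | hq | hq
    · -- q ∈ I
      rcases classify _ hpIcc with hp | hp | hp
      · -- p ∈ I : impossible (q would be a lower half)
        exfalso
        have hq1 := hnext m hp
        exact hInotim _ hq (by rw [hq1]; simpa using hp)
      · -- p is a lower half : use aLem
        have hσi0 : σ (σ.symm m - 1) = m - 1 := hprev m hp
        have hσi1 : σ (σ.symm (m+1)) = m + 1 := Equiv.apply_symm_apply σ (m+1)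
        have hlt : σ.symm m - 1 < σ.symm (m+1) := by
          rcases lt_trichotomy (σ.symm m - 1) (σ.symm (m+1)) with h | h | h
          · exact h
          · exfalso; rw [← h] at hσi1; omega
          · exfalso
            have := hσI _ hq _ hp h
            rw [hσi0, hσi1] at this
            omega
        have ha := aLem (σ.symm (m+1) - (σ.symm m - 1)).toNat (σ.symm m - 1) (σ.symm (m+1))
          hp hq hlt rfl
        rw [show σ.symm m - 1 + 1 = σ.symm m from by ring] at ha
        have hupq := hupper _ hq
        have hd : Del ε c (σ.symm m) (σ.symm (m+1) + 1)
            = Del ε c (σ.symm m) (σ.symm (m+1)) + ε (c (σ.symm (m+1))) (c (σ.symm (m+1) + 1)) :=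
          Del_succ' ε c (σ.symm m) (σ.symm (m+1)) (σ.symm (m+1) + 1) rfl
        linarith
      · -- p ∈ J : hmeet1
        have h := hmeet1 _ hp _ hq
          (by rw [Equiv.apply_symm_apply, Equiv.apply_symm_apply])
        rw [Equiv.apply_symm_apply, Equiv.apply_symm_apply] at h
        have hcv := lppconv m
        linarith
    · -- q is a lower half : p must be the matching upper half, step is 0
      have hσq1 : σ (σ.symm (m+1) - 1) = m := by
        have h := hprev (m+1) hq
        rw [show m + 1 - 1 = m from by ring] at h
        exact h
      have hpq : σ.symm m = σ.symm (m+1) - 1 := by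
        have h2 := congrArg σ.symm hσq1
        rw [Equiv.symm_apply_apply] at h2
        exact h2.symm
      have hpI : σ.symm m ∈ I := by rw [hpq]; exact hq
      have hup := hupper _ hpI
      have hd : Del ε c (σ.symm m) (σ.symm m + 1)
          = Del ε c (σ.symm m) (σ.symm m) + ε (c (σ.symm m)) (c (σ.symm m + 1)) :=
        Del_succ' ε c (σ.symm m) (σ.symm m) (σ.symm m + 1) rfl
      rw [Del_self] at hd
      have hqe : σ.symm (m+1) = σ.symm m + 1 := by omega
      rw [hqe]
      linarith
    · -- q ∈ J : strict
      exact le_of_lt (gpos m hm1 hm2 hq)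
  -- telescoping sum of rearranged steps
  have psum : ∀ m n : ℤ, m ≤ n →
      l (σ.symm m) - l (σ.symm n) - Del ε c (σ.symm m) (σ.symm n)
        = ∑ t ∈ Finset.Ico m n,
            (l (σ.symm t) - l (σ.symm (t+1)) - Del ε c (σ.symm t) (σ.symm (t+1))) := by
    intro m n hmn
    refine Int.le_induction
      (motive := fun n _ => l (σ.symm m) - l (σ.symm n) - Del ε c (σ.symm m) (σ.symm n)
        = ∑ t ∈ Finset.Ico m n,
            (l (σ.symm t) - l (σ.symm (t+1)) - Del ε c (σ.symm t) (σ.symm (t+1))))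
      ?_ ?_ n hmn
    · simp [Del_self]
    · intro n hn IH
      rw [sum_Ico_split _ hn (by omega : n ≤ n + 1), Ico_succ_singleton,
        Finset.sum_singleton, ← IH]
      have hd := Del_add ε c (σ.symm m) (σ.symm n) (σ.symm (n+1))
      linarith
  -- main argument
  intro j hj i hi
  have hjIcc := hJsub j hj
  have hiIcc := hIsub i hi
  have hσjIcc := Finset.mem_Icc.mp (hσmaps j hjIcc)
  have hσiIcc := Finset.mem_Icc.mp (hσmaps i hiIcc)
  have hji : j ≠ i := fun h => hJnotI j hj (by rw [h]; exact hi)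
  have hσji : σ j ≠ σ i := fun h => hji (σ.injective h)
  constructor
  · intro hlt
    have hs := psum (σ j) (σ i) (le_of_lt hlt)
    rw [Equiv.symm_apply_apply, Equiv.symm_apply_apply] at hs
    rw [hs]
    apply Finset.sum_nonneg
    intro t ht
    obtain ⟨ht1, ht2⟩ := Finset.mem_Ico.mp ht
    exact gnonneg t (by omega) (by omega)
  · intro h0
    rcases lt_trichotomy (σ j) (σ i) with h | h | h
    · exact h
    · exact absurd h hσji
    · exfalso
      have hs := psum (σ i) (σ j) (le_of_lt h)
      rw [Equiv.symm_apply_apply, Equiv.symm_apply_apply] at hs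
      have hpos : 0 < ∑ t ∈ Finset.Ico (σ i) (σ j),
          (l (σ.symm t) - l (σ.symm (t+1)) - Del ε c (σ.symm t) (σ.symm (t+1))) := by
        apply Finset.sum_pos'
        · intro t ht
          obtain ⟨ht1, ht2⟩ := Finset.mem_Ico.mp ht
          exact gnonneg t (by omega) (by omega)
        · refine ⟨σ j - 1, Finset.mem_Ico.mpr ⟨by omega, by omega⟩, ?_⟩
          exact gpos (σ j - 1) (by omega) (by omega)
            (by rw [show σ j - 1 + 1 = σ j from by ring, Equiv.symm_apply_apply]; exact hj)
      have h00 := Del_add ε c i j i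
      rw [Del_self] at h00
      linarith
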